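/- Let G be the group presented by generators n₁, n₂, n₃, n₄ and relators W₁ = n₄n₁n₂n₃n₄n₂n₄⁻¹n₃⁻¹n₂⁻¹n₁⁻¹n₄⁻¹n₁⁻¹, W₂ = n₄n₁n₂n₃n₄n₃n₄⁻¹n₃⁻¹n₂⁻¹n₁⁻¹n₄⁻¹n₂⁻¹, W₃ = n₄n₁n₂n₃n₄n₃⁻¹n₂⁻¹n₁⁻¹n₄⁻¹n₃⁻¹, together with n₁², n₂², n₃², n₄². There is a well-defined group homomorphism ε : G → ℤ/2ℤ with ε(n_i) = 1 for all i, and the kernel of ε is isomorphic to the group P presented by generators x, y, z and relators w₁ = z⁻¹x⁻¹yz⁻¹xz⁻¹yx⁻¹z⁻¹, w₂ = z⁻¹x⁻¹yz⁻¹yz⁻¹yx⁻¹z⁻¹x, w₃ = z⁻¹x⁻¹yz⁻¹yx⁻¹z⁻¹y, w₄ = zxy⁻¹zx⁻¹zy⁻¹xz, w₅ = zxy⁻¹zy⁻¹zy⁻¹xzx⁻¹, w₆ = zxy⁻¹zy⁻¹xzy⁻¹, via the isomorphism determined by x ↦ n₁n₂, y ↦ n₁n₃, z ↦ n₁n₄.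 -/
import Mathlib


namespace T45Fox

/-- Generators `n i` (`n_{i+1}` in the paper). -/
def n (i : Fin 4) : FreeGroup (Fin 4) := FreeGroup.of i

/-- The relators `W₁, W₂, W₃` together with the squares `n₁², n₂², n₃², n₄²`. -/
def relsG : Set (FreeGroup (Fin 4)) :=
  { n 3 * n 0 * n 1 * n 2 * n 3 * n 1 * (n 3)⁻¹ * (n 2)⁻¹ * (n 1)⁻¹ * (n 0)⁻¹
      * (n 3)⁻¹ * (n 0)⁻¹,
    n 3 * n 0 * n 1 * n 2 * n 3 * n 2 * (n 3)⁻¹ * (n 2)⁻¹ * (n 1)⁻¹ * (n 0)⁻¹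
      * (n 3)⁻¹ * (n 1)⁻¹,
    n 3 * n 0 * n 1 * n 2 * n 3 * (n 2)⁻¹ * (n 1)⁻¹ * (n 0)⁻¹ * (n 3)⁻¹ * (n 2)⁻¹,
    n 0 ^ 2, n 1 ^ 2, n 2 ^ 2, n 3 ^ 2 }

/-- The quotient of `G(T₄,₅)` by the normal closure of the squares of the
meridian generators. -/
abbrev G := PresentedGroup relsG

/-- The free generators `x, y, z`. -/
def x : FreeGroup (Fin 3) := FreeGroup.of 0
def y : FreeGroup (Fin 3) := FreeGroup.of 1
def z : FreeGroup (Fin 3) := FreeGroup.of 2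

/-- The six relators `w₁, …, w₆` of the presentation of `π₁(Σ₂T₄,₅)`. -/
def relsP : Set (FreeGroup (Fin 3)) :=
  { z⁻¹ * x⁻¹ * y * z⁻¹ * x * z⁻¹ * y * x⁻¹ * z⁻¹,
    z⁻¹ * x⁻¹ * y * z⁻¹ * y * z⁻¹ * y * x⁻¹ * z⁻¹ * x,
    z⁻¹ * x⁻¹ * y * z⁻¹ * y * x⁻¹ * z⁻¹ * y,
    z * x * y⁻¹ * z * x⁻¹ * z * y⁻¹ * x * z,
    z * x * y⁻¹ * z * y⁻¹ * z * y⁻¹ * x * z * x⁻¹,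
    z * x * y⁻¹ * z * y⁻¹ * x * z * y⁻¹ }

/-- The group `P = ⟨x, y, z ∣ w₁, …, w₆⟩`, i.e. `π₁(Σ₂T₄,₅)`. -/
abbrev P := PresentedGroup relsP

end T45Fox

namespace T45Fox

-- ===== auxiliary development =====

/-- relators die in the presented group -/
theorem mk_rel_one {α : Type*} {rels : Set (FreeGroup α)} {r : FreeGroup α} (h : r ∈ rels) :
    PresentedGroup.mk rels r = 1 :=
  (QuotientGroup.eq_one_iff r).mpr (Subgroup.subset_normalClosure h)

noncomputable abbrev X : P := PresentedGroup.of 0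
noncomputable abbrev Y : P := PresentedGroup.of 1
noncomputable abbrev Z : P := PresentedGroup.of 2
noncomputable abbrev N (i : Fin 4) : G := PresentedGroup.of i

lemma mkP_of (i : Fin 3) : PresentedGroup.mk relsP (FreeGroup.of i) = PresentedGroup.of i := rfl
lemma mkG_of (i : Fin 4) : PresentedGroup.mk relsG (FreeGroup.of i) = N i := rfl

-- the six relators of P, as identities in P
lemma hw1 : Z⁻¹ * (X⁻¹ * (Y * (Z⁻¹ * (X * (Z⁻¹ * (Y * (X⁻¹ * Z⁻¹))))))) = 1 := by
  have h := mk_rel_one (rels := relsP) (r := z⁻¹ * x⁻¹ * y * z⁻¹ * x * z⁻¹ * y * x⁻¹ * z⁻¹)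
    (by simp [relsP])
  simpa [x, y, z, map_mul, map_inv, mkP_of, mul_assoc] using h

lemma hw2 : Z⁻¹ * (X⁻¹ * (Y * (Z⁻¹ * (Y * (Z⁻¹ * (Y * (X⁻¹ * (Z⁻¹ * X)))))))) = 1 := by
  have h := mk_rel_one (rels := relsP)
    (r := z⁻¹ * x⁻¹ * y * z⁻¹ * y * z⁻¹ * y * x⁻¹ * z⁻¹ * x) (by simp [relsP])
  simpa [x, y, z, map_mul, map_inv, mkP_of, mul_assoc] using h

lemma hw3 : Z⁻¹ * (X⁻¹ * (Y * (Z⁻¹ * (Y * (X⁻¹ * (Z⁻¹ * Y)))))) = 1 := by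
  have h := mk_rel_one (rels := relsP)
    (r := z⁻¹ * x⁻¹ * y * z⁻¹ * y * x⁻¹ * z⁻¹ * y) (by simp [relsP])
  simpa [x, y, z, map_mul, map_inv, mkP_of, mul_assoc] using h

end T45Fox

namespace T45Fox

/-- generator-inverting endomorphism of the free group -/
noncomputable def fσ : FreeGroup (Fin 3) →* FreeGroup (Fin 3) :=
  FreeGroup.lift fun i => (FreeGroup.of i)⁻¹

lemma fσ_x : fσ x = x⁻¹ := by simp [fσ, x]
lemma fσ_y : fσ y = y⁻¹ := by simp [fσ, y]
lemma fσ_z : fσ z = z⁻¹ := by simp [fσ, z]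


lemma lift_inv_eq : FreeGroup.lift (fun i => (PresentedGroup.of i : P)⁻¹)
    = (PresentedGroup.mk relsP).comp fσ := by
  apply FreeGroup.ext_hom
  intro a
  simp [fσ, mkP_of]

lemma fσ_w1 : fσ (z⁻¹ * x⁻¹ * y * z⁻¹ * x * z⁻¹ * y * x⁻¹ * z⁻¹)
    = z * x * y⁻¹ * z * x⁻¹ * z * y⁻¹ * x * z := by
  simp only [map_mul, map_inv, fσ_x, fσ_y, fσ_z, inv_inv]

lemma fσ_w2 : fσ (z⁻¹ * x⁻¹ * y * z⁻¹ * y * z⁻¹ * y * x⁻¹ * z⁻¹ * x)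
    = z * x * y⁻¹ * z * y⁻¹ * z * y⁻¹ * x * z * x⁻¹ := by
  simp only [map_mul, map_inv, fσ_x, fσ_y, fσ_z, inv_inv]

lemma fσ_w3 : fσ (z⁻¹ * x⁻¹ * y * z⁻¹ * y * x⁻¹ * z⁻¹ * y)
    = z * x * y⁻¹ * z * y⁻¹ * x * z * y⁻¹ := by
  simp only [map_mul, map_inv, fσ_x, fσ_y, fσ_z, inv_inv]

lemma fσ_w4 : fσ (z * x * y⁻¹ * z * x⁻¹ * z * y⁻¹ * x * z)
    = z⁻¹ * x⁻¹ * y * z⁻¹ * x * z⁻¹ * y * x⁻¹ * z⁻¹ := by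
  simp only [map_mul, map_inv, fσ_x, fσ_y, fσ_z, inv_inv]

lemma fσ_w5 : fσ (z * x * y⁻¹ * z * y⁻¹ * z * y⁻¹ * x * z * x⁻¹)
    = z⁻¹ * x⁻¹ * y * z⁻¹ * y * z⁻¹ * y * x⁻¹ * z⁻¹ * x := by
  simp only [map_mul, map_inv, fσ_x, fσ_y, fσ_z, inv_inv]

lemma fσ_w6 : fσ (z * x * y⁻¹ * z * y⁻¹ * x * z * y⁻¹)
    = z⁻¹ * x⁻¹ * y * z⁻¹ * y * x⁻¹ * z⁻¹ * y := by
  simp only [map_mul, map_inv, fσ_x, fσ_y, fσ_z, inv_inv]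

/-- σ : P →* P sending each generator to its inverse -/
lemma relsP_check : ∀ r ∈ relsP,
    FreeGroup.lift (fun i => (PresentedGroup.of i : P)⁻¹) r = 1 := by
  intro r hr
  rw [lift_inv_eq]
  simp only [relsP, Set.mem_insert_iff, Set.mem_singleton_iff] at hr
  rcases hr with rfl | rfl | rfl | rfl | rfl | rfl
  · rw [MonoidHom.comp_apply, fσ_w1]; exact mk_rel_one (by simp [relsP])
  · rw [MonoidHom.comp_apply, fσ_w2]; exact mk_rel_one (by simp [relsP])
  · rw [MonoidHom.comp_apply, fσ_w3]; exact mk_rel_one (by simp [relsP])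
  · rw [MonoidHom.comp_apply, fσ_w4]; exact mk_rel_one (by simp [relsP])
  · rw [MonoidHom.comp_apply, fσ_w5]; exact mk_rel_one (by simp [relsP])
  · rw [MonoidHom.comp_apply, fσ_w6]; exact mk_rel_one (by simp [relsP])

noncomputable def σ : P →* P := PresentedGroup.toGroup relsP_check

@[simp] lemma σ_of (i : Fin 3) : σ (PresentedGroup.of i) = (PresentedGroup.of i)⁻¹ :=
  PresentedGroup.toGroup.of relsP_check

lemma σ_σ : σ.comp σ = MonoidHom.id P := by
  ext i
  simp

@[simp] lemma σ_σ_apply (p : P) : σ (σ p) = p := by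
  have := DFunLike.congr_fun σ_σ p
  simpa using this

/-- σ as a multiplicative automorphism -/
noncomputable def σe : P ≃* P :=
  { toFun := σ, invFun := σ, left_inv := σ_σ_apply, right_inv := σ_σ_apply,
    map_mul' := σ.map_mul }

@[simp] lemma σe_apply (p : P) : σe p = σ p := rfl

lemma σe_sq : σe * σe = 1 := by
  ext p
  simp [σe]

end T45Fox


namespace T45Fox

abbrev C2 := Multiplicative (ZMod 2)

def t : C2 := Multiplicative.ofAdd 1

lemma c2_cases (s : C2) : s = 1 ∨ s = t := by revert s; decide
lemma t_mul_t : t * t = 1 := by decide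

noncomputable def ρ : C2 →* MulAut P where
  toFun s := if s = 1 then 1 else σe
  map_one' := by simp
  map_mul' a b := by
    rcases c2_cases a with rfl | rfl <;> rcases c2_cases b with rfl | rfl <;>
      simp [t_mul_t, σe_sq, (by decide : t ≠ 1)]

@[simp] lemma ρ_t : ρ t = σe := by simp [ρ, (by decide : t ≠ 1)]

end T45Fox


namespace T45Fox

noncomputable abbrev W := SemidirectProduct P C2 ρ

open SemidirectProduct

lemma inr_t_inl (q : P) : (inr t : W) * inl q = inl (σ q) * inr t := by
  have h := inl_aut (φ := ρ) t q
  simp only [ρ_t, σe_apply] at h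
  rw [h, mul_assoc, mul_assoc, ← map_mul, inv_mul_cancel, map_one, mul_one]

noncomputable def p : Fin 4 → P := fun i =>
  match i with
  | 0 => 1
  | 1 => X⁻¹
  | 2 => Y⁻¹
  | 3 => Z⁻¹

noncomputable def m : Fin 4 → W := fun i => inl (p i) * inr t

lemma mm (i j : Fin 4) : m i * m j = inl (p i * σ (p j)) := by
  rw [m, m, mul_assoc, ← mul_assoc (inr t), inr_t_inl, ← mul_assoc, ← mul_assoc,
    ← map_mul, mul_assoc, ← map_mul, t_mul_t, map_one, mul_one]

lemma mmw (i j : Fin 4) (w : W) : m i * (m j * w) = inl (p i * σ (p j)) * w := by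
  rw [← mul_assoc, mm]

@[simp] lemma σ_p0 : σ (p 0) = 1 := by simp [p]
@[simp] lemma σ_p1 : σ (p 1) = X := by simp [p]
@[simp] lemma σ_p2 : σ (p 2) = Y := by simp [p]
@[simp] lemma σ_p3 : σ (p 3) = Z := by simp [p]

lemma msq (i : Fin 4) : m i * m i = 1 := by
  fin_cases i <;> rw [mm] <;> simp [p]
lemma minv (i : Fin 4) : (m i)⁻¹ = m i :=
  inv_eq_of_mul_eq_one_right (msq i)

end T45Fox


namespace T45Fox
open SemidirectProduct

lemma relsG_check : ∀ r ∈ relsG, FreeGroup.lift m r = 1 := by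
  intro r hr
  simp only [relsG, Set.mem_insert_iff, Set.mem_singleton_iff] at hr
  rcases hr with rfl | rfl | rfl | rfl | rfl | rfl | rfl
  · simp only [n, map_mul, map_inv, FreeGroup.lift_apply_of, minv, mul_assoc]
    rw [mmw, mmw, mmw, mmw, mmw, mm]
    simp only [σ_p0, σ_p1, σ_p2, σ_p3, ← map_mul]
    rw [show p 3 * 1 * (p 1 * Y * (p 3 * X * (p 3 * Y * (p 1 * 1 * (p 3 * 1))))) = 1 from ?_,
      map_one]
    · simp only [p, mul_one]
      simpa only [mul_assoc] using hw1
  · simp only [n, map_mul, map_inv, FreeGroup.lift_apply_of, minv, mul_assoc]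
    rw [mmw, mmw, mmw, mmw, mmw, mm]
    simp only [σ_p0, σ_p1, σ_p2, σ_p3, ← map_mul]
    rw [show p 3 * 1 * (p 1 * Y * (p 3 * Y * (p 3 * Y * (p 1 * 1 * (p 3 * X))))) = 1 from ?_,
      map_one]
    · simp only [p, mul_one]
      simpa only [mul_assoc] using hw2
  · simp only [n, map_mul, map_inv, FreeGroup.lift_apply_of, minv, mul_assoc]
    rw [mmw, mmw, mmw, mmw, mm]
    simp only [σ_p0, σ_p1, σ_p2, σ_p3, ← map_mul]
    rw [show p 3 * 1 * (p 1 * Y * (p 3 * Y * (p 1 * 1 * (p 3 * Y)))) = 1 from ?_, map_one]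
    · simp only [p, mul_one]
      simpa only [mul_assoc] using hw3
  · simp only [n, sq, map_mul, FreeGroup.lift_apply_of, msq]
  · simp only [n, sq, map_mul, FreeGroup.lift_apply_of, msq]
  · simp only [n, sq, map_mul, FreeGroup.lift_apply_of, msq]
  · simp only [n, sq, map_mul, FreeGroup.lift_apply_of, msq]

noncomputable def μ : G →* W := PresentedGroup.toGroup relsG_check

@[simp] lemma μ_of (i : Fin 4) : μ (PresentedGroup.of i) = m i :=
  PresentedGroup.toGroup.of relsG_check

end T45Fox


namespace T45Fox

lemma Nsq (i : Fin 4) : N i * N i = 1 := by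
  have h := mk_rel_one (rels := relsG) (r := n i ^ 2)
    (by fin_cases i <;> simp [relsG])
  simpa [n, sq, map_mul, mkG_of] using h

lemma Ninv (i : Fin 4) : (N i)⁻¹ = N i := inv_eq_of_mul_eq_one_right (Nsq i)

lemma Ncancel (i : Fin 4) (w : G) : N i * (N i * w) = w := by
  rw [← mul_assoc, Nsq, one_mul]

lemma hW1G : N 3 * (N 0 * (N 1 * (N 2 * (N 3 * (N 1 * (N 3 * (N 2 * (N 1 * (N 0 * (N 3 * N 0))))))))))
    = 1 := by
  have h := mk_rel_one (rels := relsG)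
    (r := n 3 * n 0 * n 1 * n 2 * n 3 * n 1 * (n 3)⁻¹ * (n 2)⁻¹ * (n 1)⁻¹ * (n 0)⁻¹
      * (n 3)⁻¹ * (n 0)⁻¹) (by simp [relsG])
  simpa only [n, map_mul, map_inv, mkG_of, Ninv, mul_assoc] using h

lemma hW2G : N 3 * (N 0 * (N 1 * (N 2 * (N 3 * (N 2 * (N 3 * (N 2 * (N 1 * (N 0 * (N 3 * N 1))))))))))
    = 1 := by
  have h := mk_rel_one (rels := relsG)
    (r := n 3 * n 0 * n 1 * n 2 * n 3 * n 2 * (n 3)⁻¹ * (n 2)⁻¹ * (n 1)⁻¹ * (n 0)⁻¹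
      * (n 3)⁻¹ * (n 1)⁻¹) (by simp [relsG])
  simpa only [n, map_mul, map_inv, mkG_of, Ninv, mul_assoc] using h

lemma hW3G : N 3 * (N 0 * (N 1 * (N 2 * (N 3 * (N 2 * (N 1 * (N 0 * (N 3 * N 2)))))))) = 1 := by
  have h := mk_rel_one (rels := relsG)
    (r := n 3 * n 0 * n 1 * n 2 * n 3 * (n 2)⁻¹ * (n 1)⁻¹ * (n 0)⁻¹ * (n 3)⁻¹ * (n 2)⁻¹)
    (by simp [relsG])
  simpa only [n, map_mul, map_inv, mkG_of, Ninv, mul_assoc] using h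

noncomputable def g : Fin 3 → G := fun i =>
  match i with
  | 0 => N 0 * N 1
  | 1 => N 0 * N 2
  | 2 => N 0 * N 3

lemma g0 : g 0 = N 0 * N 1 := rfl
lemma g1 : g 1 = N 0 * N 2 := rfl
lemma g2 : g 2 = N 0 * N 3 := rfl

lemma relsPG_check : ∀ r ∈ relsP, FreeGroup.lift g r = 1 := by
  intro r hr
  simp only [relsP, Set.mem_insert_iff, Set.mem_singleton_iff] at hr
  rcases hr with rfl | rfl | rfl | rfl | rfl | rfl
  · simp only [x, y, z, map_mul, map_inv, FreeGroup.lift_apply_of, g0, g1, g2, mul_inv_rev, Ninv,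
      mul_assoc, Ncancel, Nsq, mul_one, one_mul]
    exact hW1G
  · simp only [x, y, z, map_mul, map_inv, FreeGroup.lift_apply_of, g0, g1, g2, mul_inv_rev, Ninv,
      mul_assoc, Ncancel, Nsq, mul_one, one_mul]
    exact hW2G
  · simp only [x, y, z, map_mul, map_inv, FreeGroup.lift_apply_of, g0, g1, g2, mul_inv_rev, Ninv,
      mul_assoc, Ncancel, Nsq, mul_one, one_mul]
    exact hW3G
  · simp only [x, y, z, map_mul, map_inv, FreeGroup.lift_apply_of, g0, g1, g2, mul_inv_rev, Ninv,
      mul_assoc, Ncancel, Nsq, mul_one, one_mul]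
    simpa only [mul_assoc, Ncancel, Nsq, mul_one, one_mul]
      using congrArg (fun u => N 0 * (u * N 0)) hW1G
  · simp only [x, y, z, map_mul, map_inv, FreeGroup.lift_apply_of, g0, g1, g2, mul_inv_rev, Ninv,
      mul_assoc, Ncancel, Nsq, mul_one, one_mul]
    simpa only [mul_assoc, Ncancel, Nsq, mul_one, one_mul]
      using congrArg (fun u => N 0 * (u * N 0)) hW2G
  · simp only [x, y, z, map_mul, map_inv, FreeGroup.lift_apply_of, g0, g1, g2, mul_inv_rev, Ninv,
      mul_assoc, Ncancel, Nsq, mul_one, one_mul]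
    simpa only [mul_assoc, Ncancel, Nsq, mul_one, one_mul]
      using congrArg (fun u => N 0 * (u * N 0)) hW3G

noncomputable def φ : P →* G := PresentedGroup.toGroup relsPG_check

@[simp] lemma φ_of (i : Fin 3) : φ (PresentedGroup.of i) = g i :=
  PresentedGroup.toGroup.of relsPG_check

end T45Fox


namespace T45Fox
open SemidirectProduct

lemma relsε_check : ∀ r ∈ relsG,
    FreeGroup.lift (fun _ : Fin 4 => (Multiplicative.ofAdd (1 : ZMod 2))) r = 1 := by
  intro r hr
  simp only [relsG, Set.mem_insert_iff, Set.mem_singleton_iff] at hr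
  rcases hr with rfl | rfl | rfl | rfl | rfl | rfl | rfl <;>
    · simp only [n, sq, map_mul, map_inv, FreeGroup.lift_apply_of]
      decide

noncomputable def ε : G →* Multiplicative (ZMod 2) := PresentedGroup.toGroup relsε_check

@[simp] lemma ε_of (i : Fin 4) : ε (PresentedGroup.of i) = Multiplicative.ofAdd 1 :=
  PresentedGroup.toGroup.of relsε_check

/-- the section C2 →* G -/
noncomputable def κ : C2 →* G where
  toFun s := if s = 1 then 1 else N 0
  map_one' := by simp
  map_mul' a b := by
    rcases c2_cases a with rfl | rfl <;> rcases c2_cases b with rfl | rfl <;>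
      simp [t_mul_t, Nsq, (by decide : t ≠ 1)]

@[simp] lemma κ_t : κ t = N 0 := by simp [κ, (by decide : t ≠ 1)]

lemma compat : ∀ s : C2, φ.comp (ρ s).toMonoidHom
    = (MulAut.conj (κ s)).toMonoidHom.comp φ := by
  intro s
  rcases c2_cases s with rfl | rfl
  · ext i
    simp
  · ext i
    simp only [MonoidHom.comp_apply, MulEquiv.coe_toMonoidHom, ρ_t, σe_apply, σ_of, map_inv,
      φ_of, MulAut.conj_apply, κ_t]
    fin_cases i <;>
      simp [g, mul_inv_rev, Ninv, mul_assoc, Ncancel, Nsq, mul_one, one_mul]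

noncomputable def ν : W →* G := SemidirectProduct.lift φ κ compat

lemma ν_μ : ν.comp μ = MonoidHom.id G := by
  ext i
  simp only [MonoidHom.comp_apply, μ_of, MonoidHom.id_apply, m, map_mul, ν,
    SemidirectProduct.lift_inl, SemidirectProduct.lift_inr, κ_t]
  fin_cases i <;>
    simp [p, g0, g1, g2, mul_inv_rev, Ninv, mul_assoc, Ncancel, Nsq]

lemma μ_inj : Function.Injective μ :=
  Function.LeftInverse.injective (g := ν) fun a => by
    rw [← MonoidHom.comp_apply, ν_μ, MonoidHom.id_apply]

lemma μ_φ : μ.comp φ = SemidirectProduct.inl := by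
  refine PresentedGroup.ext fun i => ?_
  rw [MonoidHom.comp_apply, φ_of]
  fin_cases i <;> simp [g, map_mul, mm, p]

lemma φ_inj : Function.Injective φ := by
  have h : Function.Injective (⇑μ ∘ ⇑φ) := by
    rw [← MonoidHom.coe_comp, μ_φ]
    exact SemidirectProduct.inl_injective
  exact h.of_comp

lemma ε_eq : ε = SemidirectProduct.rightHom.comp μ := by
  ext i
  simp [m, rightHom_inl, t]

lemma range_eq : φ.range = ε.ker := by
  apply le_antisymm
  · rintro _ ⟨q, rfl⟩
    have : μ (φ q) = SemidirectProduct.inl q := by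
      rw [← MonoidHom.comp_apply, μ_φ]
    simp [MonoidHom.mem_ker, ε_eq, this]
  · intro a ha
    rw [MonoidHom.mem_ker, ε_eq, MonoidHom.comp_apply] at ha
    refine ⟨(μ a).left, μ_inj ?_⟩
    rw [SemidirectProduct.rightHom_eq_right] at ha
    have h2 : μ a = inl (μ a).left := by
      conv_lhs => rw [← inl_left_mul_inr_right (μ a)]
      rw [ha, map_one, mul_one]
    rw [← MonoidHom.comp_apply, μ_φ]
    exact h2.symm

end T45Fox




/-- There is a homomorphism `ε : G → ℤ/2ℤ` sending every generator `n_i` to `1`,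
and its kernel is isomorphic to `P` via `x ↦ n₁n₂`, `y ↦ n₁n₃`, `z ↦ n₁n₄`:
there is an injective homomorphism `φ : P → G` with range `ker ε` realizing
these values. -/
theorem stmt11 :
    ∃ ε : T45Fox.G →* Multiplicative (ZMod 2),
      (∀ i : Fin 4, ε (PresentedGroup.of i) = Multiplicative.ofAdd 1) ∧
      ∃ φ : T45Fox.P →* T45Fox.G,
        Function.Injective φ ∧
        φ.range = ε.ker ∧
        φ (PresentedGroup.of 0) = PresentedGroup.of 0 * PresentedGroup.of 1 ∧
        φ (PresentedGroup.of 1) = PresentedGroup.of 0 * PresentedGroup.of 2 ∧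
        φ (PresentedGroup.of 2) = PresentedGroup.of 0 * PresentedGroup.of 3 :=
  ⟨T45Fox.ε, fun i => T45Fox.ε_of i, T45Fox.φ, T45Fox.φ_inj, T45Fox.range_eq,
    T45Fox.φ_of 0, T45Fox.φ_of 1, T45Fox.φ_of 2⟩
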